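/- Let p be the total spherical perspective map and let C be a great circle of S² passing through F = (0,1,0) (equivalently, C = S² ∩ H for a plane H through the origin containing the y-axis). Then the image p(C \ {B}) is an open diameter of the perspective disc: it equals {t·u : t ∈ (−π, π)} for a fixed unit vector u ∈ ℝ². -/

import Mathlib

open scoped RealInnerProductSpace

noncomputable section

abbrev E3 := EuclideanSpace ℝ (Fin 3)
abbrev E2 := EuclideanSpace ℝ (Fin 2)

/-- The vector (a, b) in euclidean ℝ². -/
def vec2 (a b : ℝ) : E2 := (WithLp.equiv 2 (Fin 2 → ℝ)).symm ![a, b]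

/-- The vector (a, b, c) in euclidean ℝ³. -/
def vec3 (a b c : ℝ) : E3 := (WithLp.equiv 2 (Fin 3 → ℝ)).symm ![a, b, c]

/-- The total spherical perspective map: p(x,y,z) = arccos(y/‖P‖) · (x,z)/√(x²+z²). -/
def persp (P : E3) : E2 :=
  (Real.arccos (P 1 / ‖P‖) / Real.sqrt ((P 0) ^ 2 + (P 2) ^ 2)) • vec2 (P 0) (P 2)

/-- The front point F = (0,1,0). -/
def Fpt : E3 := vec3 0 1 0

/-- The back point B = (0,-1,0). -/
def Bpt : E3 := vec3 0 (-1) 0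

lemma norm_vec3 (a b c : ℝ) : ‖vec3 a b c‖ = Real.sqrt (a^2+b^2+c^2) := by
  simp [vec3, EuclideanSpace.norm_eq, Fin.sum_univ_three, sq_abs]

lemma norm_vec2 (a b : ℝ) : ‖vec2 a b‖ = Real.sqrt (a^2+b^2) := by
  simp [vec2, EuclideanSpace.norm_eq, Fin.sum_univ_two, sq_abs]

lemma smul_vec2 (t a b : ℝ) : t • vec2 a b = vec2 (t*a) (t*b) := by
  ext i; fin_cases i <;> simp [vec2]

lemma inner3 (n P : E3) : ⟪n, P⟫ = n 0 * P 0 + n 1 * P 1 + n 2 * P 2 := by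
  simp [PiLp.inner_apply, Fin.sum_univ_three]
  ring

lemma persp_param (d1 d2 s y : ℝ) (hd : d1^2 + d2^2 = 1) (h : s^2 + y^2 = 1) :
    persp (vec3 (s*d1) y (s*d2)) = ((Real.arccos y / |s|) * s) • vec2 d1 d2 := by
  have hnorm : ‖vec3 (s*d1) y (s*d2)‖ = 1 := by
    rw [norm_vec3]
    have e : (s*d1)^2 + y^2 + (s*d2)^2 = 1 := by nlinarith
    rw [e, Real.sqrt_one]
  have h02 : (s*d1)^2 + (s*d2)^2 = s^2 := by nlinarith
  have e0 : (vec3 (s*d1) y (s*d2)) 0 = s*d1 := rfl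
  have e1 : (vec3 (s*d1) y (s*d2)) 1 = y := rfl
  have e2 : (vec3 (s*d1) y (s*d2)) 2 = s*d2 := rfl
  unfold persp
  rw [hnorm, e0, e1, e2, h02, Real.sqrt_sq_eq_abs, div_one]
  rw [show vec2 (s*d1) (s*d2) = s • vec2 d1 d2 from (smul_vec2 s d1 d2).symm, smul_smul]


set_option maxHeartbeats 1600000 in
/-- a great circle through F (cut by a plane through the origin containing the
y-axis, i.e. with normal n satisfying n 1 = 0), minus B, maps onto an open diameter. -/
theorem stmt12 (n : E3) (hn : n ≠ 0) (hn1 : n 1 = 0) :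
    ∃ u : E2, ‖u‖ = 1 ∧
      persp '' ((Metric.sphere (0 : E3) 1 ∩ {P : E3 | ⟪n, P⟫ = 0}) \ {Bpt})
        = {w : E2 | ∃ t ∈ Set.Ioo (-Real.pi) Real.pi, w = t • u} := by
  set a := n 0 with ha
  set c := n 2 with hc
  have hac : 0 < a^2 + c^2 := by
    rcases (by positivity : 0 ≤ a^2 + c^2).lt_or_eq with h | h
    · exact h
    · exfalso; apply hn
      have ha0 : a = 0 := by nlinarith
      have hc0 : c = 0 := by nlinarith
      ext i
      fin_cases i
      · simpa using ha0
      · simpa using hn1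
      · simpa using hc0
  set r := Real.sqrt (a^2 + c^2) with hrdef
  have hr : 0 < r := Real.sqrt_pos.mpr hac
  have hr2 : r^2 = a^2 + c^2 := Real.sq_sqrt hac.le
  set d1 : ℝ := -c/r with hd1
  set d2 : ℝ := a/r with hd2
  have hd : d1^2 + d2^2 = 1 := by
    rw [hd1, hd2, div_pow, div_pow, ← add_div, hr2]
    rw [show (-c)^2 + a^2 = a^2 + c^2 by ring]
    exact div_self hac.ne'
  refine ⟨vec2 d1 d2, by rw [norm_vec2, hd, Real.sqrt_one], ?_⟩
  ext w
  simp only [Set.mem_image, Set.mem_diff, Set.mem_inter_iff, Set.mem_setOf_eq,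
    Set.mem_singleton_iff, mem_sphere_zero_iff_norm]
  constructor
  · rintro ⟨P, ⟨⟨hsph, hpl⟩, hB⟩, rfl⟩
    set x := P 0 with hx0
    set y := P 1 with hy0
    set z := P 2 with hz0
    have hrr : r * r = a^2 + c^2 := by nlinarith [hr2]
    have hsum : x^2 + y^2 + z^2 = 1 := by
      have h2 := real_inner_self_eq_norm_sq P
      rw [inner3, hsph] at h2
      nlinarith [h2]
    have hplane : a * x + c * z = 0 := by
      rw [inner3, hn1] at hpl; linarith [hpl]
    set s := (-c*x + a*z)/r with hs0
    have hsx : s * d1 = x := by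
      rw [hs0, hd1]
      field_simp
      linear_combination (-a) * hplane + (-x) * hrr
    have hsz : s * d2 = z := by
      rw [hs0, hd2]
      field_simp
      linear_combination (-c) * hplane + (-z) * hrr
    have hs2 : s^2 + y^2 = 1 := by
      linear_combination hsum - s^2 * hd + (x + s*d1) * hsx + (z + s*d2) * hsz
    have hP : P = vec3 (s*d1) y (s*d2) := by
      ext i; fin_cases i
      · exact hsx.symm
      · rfl
      · exact hsz.symm
    rw [hP, persp_param d1 d2 s y hd hs2]
    refine ⟨_, ?_, rfl⟩
    by_cases hs : s = 0
    · simp only [hs, mul_zero, Set.mem_Ioo]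
      exact ⟨by linarith [Real.pi_pos], Real.pi_pos⟩
    · have habs : |Real.arccos y / |s| * s| = Real.arccos y := by
        rw [abs_mul, abs_div, abs_abs, div_mul_cancel₀ _ (abs_ne_zero.mpr hs),
          abs_of_nonneg (Real.arccos_nonneg y)]
      have hspos : 0 < s^2 := by positivity
      have hy1 : -1 < y := by nlinarith
      have hy2 : y ≤ 1 := by nlinarith [sq_nonneg s]
      have hlt : Real.arccos y < Real.pi := by
        refine lt_of_le_of_ne (Real.arccos_le_pi y) fun hEq => ?_
        have hcc := Real.cos_arccos hy1.le hy2
        rw [hEq, Real.cos_pi] at hcc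
        linarith
      have habslt : |Real.arccos y / |s| * s| < Real.pi := by rw [habs]; exact hlt
      have h2 := abs_lt.mp habslt
      exact Set.mem_Ioo.mpr ⟨h2.1, h2.2⟩
  · rintro ⟨t, ⟨ht1, ht2⟩, rfl⟩
    have habs : Real.arccos (Real.cos t) = |t| := by
      rw [← Real.cos_abs, Real.arccos_cos (abs_nonneg t) (abs_lt.mpr ⟨ht1, ht2⟩).le]
    refine ⟨vec3 (Real.sin t * d1) (Real.cos t) (Real.sin t * d2), ⟨⟨?_, ?_⟩, ?_⟩, ?_⟩
    · rw [norm_vec3]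
      have e : (Real.sin t*d1)^2 + (Real.cos t)^2 + (Real.sin t*d2)^2 = 1 := by
        nlinarith [Real.sin_sq_add_cos_sq t, hd]
      rw [e, Real.sqrt_one]
    · show ⟪n, _⟫ = 0
      rw [inner3, hn1]
      show a * (Real.sin t * d1) + 0 * _ + c * (Real.sin t * d2) = 0
      rw [hd1, hd2]; field_simp; ring
    · intro h
      have hc1 : Real.cos t = -1 := congrArg (fun v : E3 => v 1) h
      rw [hc1, Real.arccos_neg_one] at habs
      have hlt : |t| < Real.pi := abs_lt.mpr ⟨ht1, ht2⟩
      rw [← habs] at hlt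
      exact lt_irrefl _ hlt
    · rw [persp_param d1 d2 (Real.sin t) (Real.cos t) hd
        (by nlinarith [Real.sin_sq_add_cos_sq t]), habs]
      congr 1
      rcases lt_trichotomy t 0 with h | h | h
      · have hsin : Real.sin t < 0 := by
          have := Real.sin_pos_of_pos_of_lt_pi (x := -t) (by linarith) (by linarith)
          rw [Real.sin_neg] at this; linarith
        rw [abs_of_neg h, abs_of_neg hsin, neg_div_neg_eq, div_mul_cancel₀ _ hsin.ne]
      · simp [h]
      · have hsin : 0 < Real.sin t := Real.sin_pos_of_pos_of_lt_pi h ht2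
        rw [abs_of_pos h, abs_of_pos hsin, div_mul_cancel₀ _ hsin.ne']
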